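/- For any θ ∈ L²([a,b],ℝ), the equation g_θ(σ) = 1, where g_θ(σ) = ∫ₐᵇ max(θ(x) − σ, 0) dx, admits exactly one solution σ ∈ ℝ. -/

import Mathlib

open MeasureTheory

/-- For `θ ∈ L²([a,b])`, the equation `g_θ(σ) = 1`, with
`g_θ(σ) = ∫ₐᵇ max(θ(x) − σ, 0) dx`, has exactly one solution `σ ∈ ℝ`. -/
theorem gtheta_eq_one_existsUnique (a b : ℝ) (hab : a < b) (θ : ℝ → ℝ)
    (hθ : MemLp θ 2 (volume.restrict (Set.Icc a b))) :
    ∃! σ : ℝ, (∫ x in Set.Icc a b, max (θ x - σ) 0) = 1 := by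
  set μ := volume.restrict (Set.Icc a b) with hμ
  have hfin : IsFiniteMeasure μ := by
    constructor
    rw [hμ, Measure.restrict_apply_univ, Real.volume_Icc]
    exact ENNReal.ofReal_lt_top
  have hθi : Integrable θ μ := hθ.integrable (by norm_num)
  set g : ℝ → ℝ := fun σ => ∫ x, max (θ x - σ) 0 ∂μ with hg
  have hint : ∀ σ : ℝ, Integrable (fun x => max (θ x - σ) 0) μ :=
    fun σ => (hθi.sub (integrable_const σ)).pos_part
  have hμuniv : (μ Set.univ).toReal = b - a := by
    rw [hμ, Measure.restrict_apply_univ, Real.volume_Icc,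
      ENNReal.toReal_ofReal (by linarith)]
  -- antitone
  have hanti : Antitone g := by
    intro σ σ' h
    exact integral_mono (hint σ') (hint σ) fun x => max_le_max (by linarith) le_rfl
  -- Lipschitz / continuity
  have hcont : Continuous g := by
    have key : ∀ σ σ' : ℝ, |g σ - g σ'| ≤ (b - a) * |σ - σ'| := by
      intro σ σ'
      rw [hg]
      simp only
      rw [← integral_sub (hint σ) (hint σ')]
      calc |∫ x, (max (θ x - σ) 0 - max (θ x - σ') 0) ∂μ|
          = ‖∫ x, (max (θ x - σ) 0 - max (θ x - σ') 0) ∂μ‖ := (Real.norm_eq_abs _).symm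
        _ ≤ ∫ x, ‖max (θ x - σ) 0 - max (θ x - σ') 0‖ ∂μ := norm_integral_le_integral_norm _
        _ = ∫ x, |max (θ x - σ) 0 - max (θ x - σ') 0| ∂μ := by simp [Real.norm_eq_abs]
        _ ≤ ∫ _x, |σ - σ'| ∂μ := by
            refine integral_mono ((hint σ).sub (hint σ')).abs (integrable_const _) fun x => ?_
            have h1 := abs_max_sub_max_le_abs (θ x - σ) (θ x - σ') 0
            have h2 : (θ x - σ) - (θ x - σ') = σ' - σ := by ring
            calc |max (θ x - σ) 0 - max (θ x - σ') 0| ≤ |(θ x - σ) - (θ x - σ')| := h1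
              _ = |σ - σ'| := by rw [h2, abs_sub_comm]
        _ = (b - a) * |σ - σ'| := by
            rw [integral_const, smul_eq_mul, measureReal_def, hμuniv]
    refine (LipschitzWith.of_dist_le_mul (K := (b - a).toNNReal) fun σ σ' => ?_).continuous
    rw [Real.dist_eq, Real.dist_eq, Real.coe_toNNReal _ (by linarith)]
    exact key σ σ'
  -- lower point: g σ₁ ≥ 1
  set σ₁ : ℝ := ((∫ x, θ x ∂μ) - 1) / (b - a) with hσ₁
  have hglo : 1 ≤ g σ₁ := by
    have h1 : ∫ x, (θ x - σ₁) ∂μ ≤ g σ₁ :=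
      integral_mono (hθi.sub (integrable_const _)) (hint σ₁) fun x => le_max_left _ _
    have h2 : ∫ x, (θ x - σ₁) ∂μ = (∫ x, θ x ∂μ) - (b - a) * σ₁ := by
      rw [integral_sub hθi (integrable_const _), integral_const, smul_eq_mul, measureReal_def, hμuniv]
    have h3 : (b - a) * σ₁ = (∫ x, θ x ∂μ) - 1 := by
      rw [hσ₁, mul_comm, div_mul_cancel₀ _ (by linarith : b - a ≠ (0:ℝ))]
    linarith
  -- upper point: g n → 0
  have hdct : Filter.Tendsto (fun n : ℕ => g n) Filter.atTop (nhds 0) := by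
    have h0 : (0 : ℝ) = ∫ x, (0 : ℝ) ∂μ := (integral_zero _ _).symm
    rw [h0]
    refine tendsto_integral_of_dominated_convergence (fun x => max (θ x) 0)
      (fun n => (hint n).1) hθi.pos_part (fun n => ?_) ?_
    · filter_upwards with x
      rw [Real.norm_eq_abs, abs_of_nonneg (le_max_right _ _)]
      exact max_le_max (by simp [Nat.cast_nonneg]) le_rfl
    · filter_upwards with x
      refine tendsto_const_nhds.congr' ?_
      filter_upwards [tendsto_natCast_atTop_atTop.eventually_ge_atTop (θ x)] with n hn
      exact (max_eq_right (by linarith)).symm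
  obtain ⟨n, hn⟩ := (hdct.eventually_lt_const one_pos).exists
  -- existence via IVT
  have hle : σ₁ ≤ max σ₁ (n : ℝ) := le_max_left _ _
  have hghi : g (max σ₁ (n : ℝ)) ≤ 1 := le_of_lt (lt_of_le_of_lt (hanti (le_max_right _ _)) hn)
  obtain ⟨σ₀, -, hσ₀⟩ := intermediate_value_Icc' hle hcont.continuousOn ⟨hghi, hglo⟩
  -- uniqueness lemma
  have huniq : ∀ s t : ℝ, s < t → g s = 1 → g t = 1 → False := by
    intro s t hst hs ht
    have hzero : ∫ x, (max (θ x - s) 0 - max (θ x - t) 0) ∂μ = 0 := by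
      rw [integral_sub (hint s) (hint t)]
      show g s - g t = 0
      rw [hs, ht]; ring
    have hnn : 0 ≤ fun x => max (θ x - s) 0 - max (θ x - t) 0 := by
      intro x
      simp only [Pi.zero_apply, sub_nonneg]
      exact max_le_max (by linarith) le_rfl
    have hea := (integral_eq_zero_iff_of_nonneg hnn ((hint s).sub (hint t))).mp hzero
    have hzt : (fun x => max (θ x - t) 0) =ᶠ[ae μ] 0 := by
      filter_upwards [hea] with x hx
      simp only [Pi.zero_apply] at hx ⊢
      rcases le_or_gt (θ x) t with h | h
      · exact max_eq_right (by linarith)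
      · rw [max_eq_left (by linarith), max_eq_left (by linarith)] at hx
        linarith
    have : g t = 0 := by
      rw [hg]
      simp only
      rw [integral_congr_ae hzt]
      simp
    rw [ht] at this
    exact one_ne_zero this
  refine ⟨σ₀, hσ₀, fun σ' h' => ?_⟩
  by_contra hne
  rcases lt_or_gt_of_ne hne with h | h
  · exact huniq σ' σ₀ h h' hσ₀
  · exact huniq σ₀ σ' h hσ₀ h'
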